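/- Let X be an F_q-subspace of (F_{q^m})^k with dim_{F_q} X = n, and suppose there exists an integer l such that for every F_{q^m}-subspace S of (F_{q^m})^k with dim_{F_{q^m}} S = r one has dim_{F_q}(S ∩ X) = l. Then q^n = (q^l − 1)·(q^{mk} − 1)/(q^{mr} − 1) + 1. -/

import Mathlib

open Matrix

open Module in
private lemma exists_linEquiv_map' {K V : Type*} [Field K] [AddCommGroup V] [Module K V]
    [FiniteDimensional K V] {x y : V} (hx : x ≠ 0) (hy : y ≠ 0) :
    ∃ e : V ≃ₗ[K] V, e x = y := by
  classical
  have hsx := (linearIndepOn_singleton_iff K (v := id) (i := x)).2 hx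
  have hsy := (linearIndepOn_singleton_iff K (v := id) (i := y)).2 hy
  let bx := Basis.extend hsx
  let by' := Basis.extend hsy
  haveI : Fintype (hsx.extend (Set.subset_univ _)) := FiniteDimensional.fintypeBasisIndex bx
  haveI : Fintype (hsy.extend (Set.subset_univ _)) := FiniteDimensional.fintypeBasisIndex by'
  have hcard : Fintype.card (hsx.extend (Set.subset_univ _))
      = Fintype.card (hsy.extend (Set.subset_univ _)) := by
    rw [← finrank_eq_card_basis bx, ← finrank_eq_card_basis by']
  have hxmem : x ∈ hsx.extend (Set.subset_univ _) := hsx.subset_extend _ rfl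
  have hymem : y ∈ hsy.extend (Set.subset_univ _) := hsy.subset_extend _ rfl
  let f := Fintype.equivOfCardEq hcard
  let g := f.trans (Equiv.swap (f ⟨x, hxmem⟩) ⟨y, hymem⟩)
  refine ⟨bx.equiv by' g, ?_⟩
  have h1 : bx ⟨x, hxmem⟩ = x := Basis.extend_apply_self ..
  have h2 : g ⟨x, hxmem⟩ = ⟨y, hymem⟩ := by
    simp only [g, Equiv.trans_apply, Equiv.swap_apply_left]
  calc (bx.equiv by' g) x = (bx.equiv by' g) (bx ⟨x, hxmem⟩) := by rw [h1]
    _ = by' (g ⟨x, hxmem⟩) := Basis.equiv_apply ..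
    _ = y := by rw [h2]; exact Basis.extend_apply_self ..

open Module in
private lemma exists_submodule_finrank_mem' {K V : Type*} [Field K] [AddCommGroup V] [Module K V]
    [FiniteDimensional K V] {x : V} (hx : x ≠ 0) {r : ℕ} (hr1 : 1 ≤ r)
    (hrk : r ≤ Module.finrank K V) :
    ∃ S : Submodule K V, Module.finrank K S = r ∧ x ∈ S := by
  classical
  have hs := (linearIndepOn_singleton_iff K (v := id) (i := x)).2 hx
  let b := Basis.extend hs
  haveI : Fintype (hs.extend (Set.subset_univ _)) := FiniteDimensional.fintypeBasisIndex b
  have hxmem : x ∈ hs.extend (Set.subset_univ _) := hs.subset_extend _ rfl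
  have hbi : LinearIndependent K ((↑) : (hs.extend (Set.subset_univ _)) → V) := by
    have := b.linearIndependent
    rwa [Basis.coe_extend] at this
  obtain ⟨u, hxu, hut, hcard⟩ := Finset.exists_subsuperset_card_eq
    (s := ({x} : Finset V)) (t := (hs.extend (Set.subset_univ _)).toFinset)
    (by simp [Set.mem_toFinset, hxmem])
    (by simpa using hr1)
    (by rw [Set.toFinset_card, ← finrank_eq_card_basis b]; exact hrk)
  have husub : (u : Set V) ⊆ hs.extend (Set.subset_univ _) := by
    intro v hv
    exact Set.mem_toFinset.1 (hut hv)
  have hind : LinearIndependent K (fun v : (u : Set V) => (v : V)) := hbi.comp (Set.inclusion husub) (Set.inclusion_injective husub)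
  refine ⟨Submodule.span K (u : Set V), ?_, Submodule.subset_span (by simpa using hxu)⟩
  rw [finrank_span_set_eq_card hind]
  simpa using hcard

/-- If every `r`-dimensional `F_{q^m}`-subspace `S` of `(F_{q^m})^k` meets the
`F_q`-subspace `X` (of `F_q`-dimension `n`) in an `F_q`-subspace of dimension exactly `l`,
then `q^n = (q^l − 1)(q^{mk} − 1)/(q^{mr} − 1) + 1`
(equivalently, `(q^n − 1)(q^{mr} − 1) = (q^l − 1)(q^{mk} − 1)`). -/
theorem constant_intersection_count
    {Fq Fqm : Type*} [Field Fq] [Field Fqm] [Algebra Fq Fqm]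
    [Fintype Fq] [Fintype Fqm]
    {q m k n r l : ℕ} (hq : Fintype.card Fq = q) (hm : Module.finrank Fq Fqm = m)
    (hr1 : 1 ≤ r) (hrk : r ≤ k - 1) (hk : 1 < k)
    (X : Submodule Fq (Fin k → Fqm)) (hXn : Module.finrank Fq X = n)
    (hl : ∀ S : Submodule Fqm (Fin k → Fqm), Module.finrank Fqm S = r →
      Module.finrank Fq
        (X ⊓ Submodule.restrictScalars Fq S : Submodule Fq (Fin k → Fqm)) = l) :
    q ^ n = (q ^ l - 1) * (q ^ (m * k) - 1) / (q ^ (m * r) - 1) + 1 ∧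
    (q ^ n - 1) * (q ^ (m * r) - 1) = (q ^ l - 1) * (q ^ (m * k) - 1) := by
  classical
  set V := Fin k → Fqm with hV
  haveI : Finite (Submodule Fqm V) :=
    Finite.of_injective (fun S : Submodule Fqm V => (S : Set V)) SetLike.coe_injective
  haveI : Fintype (Submodule Fqm V) := Fintype.ofFinite _
  have hq2 : 2 ≤ q := hq ▸ Fintype.one_lt_card
  have hm1 : 1 ≤ m := hm ▸ Module.finrank_pos
  have hfrV : Module.finrank Fqm V = k := Module.finrank_fin_fun Fqm
  have hfrVq : Module.finrank Fq V = m * k := by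
    rw [← Module.finrank_mul_finrank Fq Fqm V, hm, hfrV]
  -- Setup
  let P : Submodule Fq V → Finset V := fun W => Finset.univ.filter (fun v => v ∈ W ∧ v ≠ 0)
  let 𝒮 : Finset (Submodule Fqm V) := Finset.univ.filter (fun S => Module.finrank Fqm S = r)
  let x0 : V := fun _ => 1
  have hx0 : x0 ≠ 0 := by
    intro h
    exact one_ne_zero (congrFun h ⟨0, by omega⟩)
  let A : ℕ := (𝒮.filter (fun S => x0 ∈ S)).card
  -- cardinality of P W
  have hPcard : ∀ W : Submodule Fq V, (P W).card = q ^ (Module.finrank Fq W) - 1 := by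
    intro W
    have h0 : (0 : V) ∈ W := W.zero_mem
    have heq : P W = (Finset.univ.filter (fun v => v ∈ W)).erase 0 := by
      ext v
      simp only [P, Finset.mem_filter, Finset.mem_erase, Finset.mem_univ, true_and]
      tauto
    rw [heq, Finset.card_erase_of_mem (by simp [h0])]
    congr 1
    have h1 : (Finset.univ.filter (fun v => v ∈ W)).card = Fintype.card {v : V // v ∈ W} :=
      (Fintype.card_subtype _).symm
    rw [h1, ← hq]
    exact Module.card_eq_pow_finrank (K := Fq)
  -- main double counting
  have key : ∀ (W : Submodule Fq V) (c : ℕ),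
      (∀ S ∈ 𝒮, ((P W).filter (fun v => v ∈ S)).card = c) →
      (P W).card * A = 𝒮.card * c := by
    intro W c hc
    have h1 : ∑ v ∈ P W, (𝒮.filter (fun S => v ∈ S)).card
        = ∑ S ∈ 𝒮, ((P W).filter (fun v => v ∈ S)).card := by
      simp_rw [Finset.card_filter]
      exact Finset.sum_comm
    have h2 : ∀ v ∈ P W, (𝒮.filter (fun S => v ∈ S)).card = A := by
      intro v hv
      have hvne : v ≠ 0 := (Finset.mem_filter.1 hv).2.2
      obtain ⟨e, he⟩ := exists_linEquiv_map' (K := Fqm) hvne hx0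
      refine Finset.card_bij' (fun S _ => S.map (e : V →ₗ[Fqm] V))
        (fun S _ => S.map (e.symm : V →ₗ[Fqm] V)) ?_ ?_ ?_ ?_
      · intro S hS
        simp only [Finset.mem_filter, 𝒮, Finset.mem_univ, true_and] at hS ⊢
        refine ⟨by rw [LinearEquiv.finrank_map_eq]; exact hS.1, ?_⟩
        rw [← he]
        exact Submodule.mem_map_of_mem hS.2
      · intro S hS
        simp only [Finset.mem_filter, 𝒮, Finset.mem_univ, true_and] at hS ⊢
        refine ⟨by rw [LinearEquiv.finrank_map_eq]; exact hS.1, ?_⟩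
        have : v = e.symm x0 := by rw [← he, LinearEquiv.symm_apply_apply]
        rw [this]
        exact Submodule.mem_map_of_mem hS.2
      · intro S _
        ext w
        simp [Submodule.mem_map_equiv]
      · intro S _
        ext w
        simp [Submodule.mem_map_equiv]
    calc (P W).card * A = ∑ v ∈ P W, (𝒮.filter (fun S => v ∈ S)).card := by
          rw [Finset.sum_congr rfl h2, Finset.sum_const, smul_eq_mul]
      _ = ∑ S ∈ 𝒮, ((P W).filter (fun v => v ∈ S)).card := h1
      _ = 𝒮.card * c := by rw [Finset.sum_congr rfl hc, Finset.sum_const, smul_eq_mul]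
  -- counts for X
  have hcX : ∀ S ∈ 𝒮, ((P X).filter (fun v => v ∈ S)).card = q ^ l - 1 := by
    intro S hS
    have hfr : Module.finrank Fqm S = r := (Finset.mem_filter.1 hS).2
    have heq : (P X).filter (fun v => v ∈ S) = P (X ⊓ Submodule.restrictScalars Fq S) := by
      ext v
      simp only [P, Finset.mem_filter, Finset.mem_univ, true_and, Submodule.mem_inf,
        Submodule.restrictScalars_mem]
      tauto
    rw [heq, hPcard, hl S hfr]
  -- counts for ⊤
  have hcT : ∀ S ∈ 𝒮, ((P ⊤).filter (fun v => v ∈ S)).card = q ^ (m * r) - 1 := by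
    intro S hS
    have hfr : Module.finrank Fqm S = r := (Finset.mem_filter.1 hS).2
    have heq : (P ⊤).filter (fun v => v ∈ S) = P (Submodule.restrictScalars Fq S) := by
      ext v
      simp only [P, Finset.mem_filter, Finset.mem_univ, true_and, Submodule.mem_top,
        Submodule.restrictScalars_mem]
      tauto
    rw [heq, hPcard]
    have h1 : Module.finrank Fq (Submodule.restrictScalars Fq S) = Module.finrank Fq S :=
      ((Submodule.restrictScalarsEquiv Fq Fqm V S).restrictScalars Fq).finrank_eq
    have h2 : Module.finrank Fq S = m * r := by
      rw [← Module.finrank_mul_finrank Fq Fqm S, hm, hfr]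
    rw [h1, h2]
  have h1 : (q ^ n - 1) * A = 𝒮.card * (q ^ l - 1) := by
    have := key X _ hcX
    rwa [hPcard, hXn] at this
  have h2 : (q ^ (m * k) - 1) * A = 𝒮.card * (q ^ (m * r) - 1) := by
    have := key ⊤ _ hcT
    rwa [hPcard, finrank_top, hfrVq] at this
  have hA : 0 < A := by
    obtain ⟨S0, hS0fr, hS0x⟩ := exists_submodule_finrank_mem' (K := Fqm) hx0 hr1
      (by rw [hfrV]; omega)
    apply Finset.card_pos.2
    exact ⟨S0, by simp [𝒮, Finset.mem_filter, hS0fr, hS0x]⟩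
  have goal2 : (q ^ n - 1) * (q ^ (m * r) - 1) = (q ^ l - 1) * (q ^ (m * k) - 1) := by
    apply Nat.eq_of_mul_eq_mul_right hA
    calc (q ^ n - 1) * (q ^ (m * r) - 1) * A = ((q ^ n - 1) * A) * (q ^ (m * r) - 1) := by ring
      _ = (𝒮.card * (q ^ l - 1)) * (q ^ (m * r) - 1) := by rw [h1]
      _ = (q ^ l - 1) * (𝒮.card * (q ^ (m * r) - 1)) := by ring
      _ = (q ^ l - 1) * ((q ^ (m * k) - 1) * A) := by rw [← h2]
      _ = (q ^ l - 1) * (q ^ (m * k) - 1) * A := by ring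
  refine ⟨?_, goal2⟩
  have hqr : 0 < q ^ (m * r) - 1 := by
    have h2q : 2 ≤ q ^ (m * r) := le_trans hq2 (Nat.le_self_pow (by positivity) q)
    omega
  have hqn : 1 ≤ q ^ n := Nat.one_le_pow _ _ (by omega)
  have hdiv : (q ^ l - 1) * (q ^ (m * k) - 1) / (q ^ (m * r) - 1) = q ^ n - 1 := by
    rw [← goal2, Nat.mul_div_cancel _ hqr]
  rw [hdiv]
  omega
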